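/- Let K be a field and r ≥ 1. The standard polynomial St_{2r+1} of degree 2r+1 is a polynomial identity of UT_r(K) but is not a polynomial identity of UT_{r+1}(K). -/

import Mathlib

open Matrix

/-- Evaluation of the standard polynomial `St_m = ∑ σ, sgn(σ) x_{σ(1)} ⋯ x_{σ(m)}`
at the tuple `a` of elements of the `K`-algebra `A`. -/
noncomputable def stdEval {K A : Type*} [Field K] [Ring A] [Algebra K A]
    (m : ℕ) (a : Fin m → A) : A :=
  ∑ σ : Equiv.Perm (Fin m), ((Equiv.Perm.sign σ : ℤ) : K) • (List.ofFn fun i => a (σ i)).prod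

/-- `M` is an upper triangular matrix, i.e. an element of `UT_n(K)`. -/
def IsUT {K : Type*} [Field K] {n : ℕ} (M : Matrix (Fin n) (Fin n) K) : Prop :=
  ∀ i j : Fin n, (j : ℕ) < (i : ℕ) → M i j = 0

lemma stdEval_eq {K A : Type*} [Field K] [Ring A] [Algebra K A] (m : ℕ) (a : Fin m → A) :
    stdEval (K := K) m a =
      MultilinearMap.alternatization (MultilinearMap.mkPiAlgebraFin K m A) a := by
  rw [MultilinearMap.alternatization_apply, stdEval]
  refine Finset.sum_congr rfl fun σ _ => ?_
  rw [MultilinearMap.domDomCongr_apply, MultilinearMap.mkPiAlgebraFin_apply,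
    Int.cast_smul_eq_zsmul, Units.smul_def]


section Band
variable {K : Type*} [Field K] {n : ℕ}

def Band (k : ℕ) (M : Matrix (Fin n) (Fin n) K) : Prop :=
  ∀ i j : Fin n, (j : ℕ) < (i : ℕ) + k → M i j = 0

lemma Band.mul {k l : ℕ} {M N : Matrix (Fin n) (Fin n) K} (hM : Band k M) (hN : Band l N) :
    Band (k + l) (M * N) := by
  intro i j hij
  rw [Matrix.mul_apply]
  apply Finset.sum_eq_zero
  intro t _
  by_cases h : (t : ℕ) < (i : ℕ) + k
  · rw [hM i t h, zero_mul]
  · rw [hN t j (by omega), mul_zero]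

lemma Band.one : Band (K := K) (n := n) 0 1 := by
  intro i j hij
  exact Matrix.one_apply_ne (fun h => by rw [h] at hij; omega)

lemma Band.prod : ∀ (m : ℕ) (v : Fin m → Matrix (Fin n) (Fin n) K) (wt : Fin m → ℕ),
    (∀ i, Band (wt i) (v i)) → Band (∑ i, wt i) (List.ofFn v).prod
  | 0, v, wt, h => by simpa using Band.one
  | (m + 1), v, wt, h => by
    rw [List.ofFn_succ, List.prod_cons, Fin.sum_univ_succ]
    exact (h 0).mul (Band.prod m (fun i => v i.succ) (fun i => wt i.succ) fun i => h i.succ)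

end Band


section Chain
variable {K : Type*} [Field K] {n : ℕ}

lemma prod_std_chain : ∀ (m : ℕ) (f : Fin (m + 1) → Fin n × Fin n),
    (∀ i : Fin m, (f i.castSucc).2 = (f i.succ).1) →
    (List.ofFn fun i => Matrix.single (f i).1 (f i).2 (1 : K)).prod =
      Matrix.single (f 0).1 (f (Fin.last m)).2 1
  | 0, f, _ => by simp
  | (m + 1), f, hf => by
    rw [List.ofFn_succ, List.prod_cons]
    rw [prod_std_chain m (fun i => f i.succ)
      (fun i => by simpa [Fin.castSucc_succ] using hf i.succ)]
    have h0 : (f 0).2 = (f (Fin.succ 0)).1 := by simpa using hf 0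
    rw [h0, Matrix.single_mul_single_same, one_mul, Fin.succ_last]

lemma prod_std_not_chain : ∀ (m : ℕ) (f : Fin (m + 1) → Fin n × Fin n),
    (¬ ∀ i : Fin m, (f i.castSucc).2 = (f i.succ).1) →
    (List.ofFn fun i => Matrix.single (f i).1 (f i).2 (1 : K)).prod = 0
  | 0, f, hf => absurd (fun i => i.elim0) hf
  | (m + 1), f, hf => by
    rw [List.ofFn_succ, List.prod_cons]
    by_cases hc : ∀ i : Fin m, (f i.succ.castSucc).2 = (f i.succ.succ).1
    · have h0 : (f 0).2 ≠ (f (Fin.succ 0)).1 := by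
        intro h0
        apply hf
        intro i
        refine Fin.cases ?_ ?_ i
        · simpa using h0
        · intro j; simpa [Fin.castSucc_succ] using hc j
      rw [prod_std_chain m (fun i => f i.succ)
        (fun i => by simpa [Fin.castSucc_succ] using hc i)]
      exact Matrix.single_mul_single_of_ne _ _ _ _ h0 1
    · rw [prod_std_not_chain m (fun i => f i.succ)
        (fun h => hc (fun i => by simpa [Fin.castSucc_succ] using h i)), mul_zero]

end Chain


theorem UT_identity_aux {K : Type*} [Field K] (r : ℕ)
    (a : Fin (2 * r + 1) → Matrix (Fin r) (Fin r) K) (hUT : ∀ l, IsUT (a l)) :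
    stdEval (K := K) (2 * r + 1) a = 0 := by
  classical
  set d : Fin (2 * r + 1) → Matrix (Fin r) (Fin r) K :=
    fun l => Matrix.diagonal (fun i => a l i i) with hd
  set nn : Fin (2 * r + 1) → Matrix (Fin r) (Fin r) K := fun l => a l - d l with hn
  have hband0 : ∀ l, Band 0 (d l) := by
    intro l i j hij
    exact Matrix.diagonal_apply_ne _ (fun h => by rw [h] at hij; omega)
  have hband1 : ∀ l, Band 1 (nn l) := by
    intro l i j hij
    by_cases h : i = j
    · subst h
      simp [hn, hd, Matrix.sub_apply, Matrix.diagonal_apply_eq]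
    · have hji : (j : ℕ) < (i : ℕ) := by
        rcases Nat.lt_or_ge (j : ℕ) (i : ℕ) with h' | h'
        · exact h'
        · exact absurd (Fin.ext (by omega)) h
      simp [hn, hd, Matrix.sub_apply, hUT l i j hji, Matrix.diagonal_apply_ne _ h]
  have ha : a = nn + d := by
    funext l
    simp [hn]
  rw [stdEval_eq, ha]
  set F := MultilinearMap.alternatization
    (MultilinearMap.mkPiAlgebraFin K (2 * r + 1) (Matrix (Fin r) (Fin r) K)) with hF
  have hexp : F.toMultilinearMap (nn + d)
      = ∑ s : Finset (Fin (2 * r + 1)), F.toMultilinearMap (s.piecewise nn d) :=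
    MultilinearMap.map_add_univ _ nn d
  rw [show F (nn + d) = F.toMultilinearMap (nn + d) from rfl, hexp]
  apply Finset.sum_eq_zero
  intro s _
  rcases Nat.lt_or_ge s.card r with hcard | hcard
  · -- many diagonal arguments: linearly dependent
    apply AlternatingMap.map_linearDependent
    intro hli
    have h1 : LinearIndependent K
        ((s.piecewise nn d) ∘ (Subtype.val : (sᶜ : Finset (Fin (2 * r + 1))) → Fin (2 * r + 1))) :=
      hli.comp _ Subtype.val_injective
    set L : (Fin r → K) →ₗ[K] Matrix (Fin r) (Fin r) K :=
      { toFun := Matrix.diagonal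
        map_add' := fun x y => (Matrix.diagonal_add x y).symm
        map_smul' := fun c x => by simp [Matrix.diagonal_smul] } with hL
    have h2 : ((s.piecewise nn d) ∘
          (Subtype.val : (sᶜ : Finset (Fin (2 * r + 1))) → Fin (2 * r + 1))) =
        L ∘ (fun x : (sᶜ : Finset (Fin (2 * r + 1))) => fun i => a x.1 i i) := by
      funext x
      have hx : x.1 ∉ s := Finset.mem_compl.1 x.2
      simp [Finset.piecewise_eq_of_notMem _ _ _ hx, hd, hL]
    rw [h2] at h1
    have h3 := (LinearIndependent.of_comp L h1).fintype_card_le_finrank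
    rw [Module.finrank_fin_fun, Fintype.card_coe, Finset.card_compl, Fintype.card_fin] at h3
    omega
  · -- many nilpotent arguments: product vanishes
    rw [show F.toMultilinearMap (s.piecewise nn d) = F (s.piecewise nn d) from rfl,
      ← stdEval_eq, stdEval]
    apply Finset.sum_eq_zero
    intro σ _
    have hprod := Band.prod (2 * r + 1) (fun i => (s.piecewise nn d) (σ i))
      (fun i => if σ i ∈ s then 1 else 0)
      (fun i => by
        by_cases h : σ i ∈ s
        · simpa [Finset.piecewise_eq_of_mem _ _ _ h, h] using hband1 (σ i)
        · simpa [Finset.piecewise_eq_of_notMem _ _ _ h, h] using hband0 (σ i))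
    have hsum : (∑ i, if σ i ∈ s then 1 else 0) = s.card := by
      rw [Equiv.sum_comp σ (fun i => if i ∈ s then 1 else 0)]
      simp [Finset.sum_ite_mem]
    rw [hsum] at hprod
    have hzero : (List.ofFn fun i => (s.piecewise nn d) (σ i)).prod = 0 := by
      ext i j
      exact hprod i j (by have := j.2; omega)
    rw [hzero, smul_zero]

theorem UT_not_identity_aux {K : Type*} [Field K] (r : ℕ) (hr : 1 ≤ r) :
    ¬ ∀ a : Fin (2 * r + 1) → Matrix (Fin (r + 1)) (Fin (r + 1)) K,
        (∀ l, IsUT (a l)) → stdEval (K := K) (2 * r + 1) a = 0 := by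
  classical
  intro hid
  set p : Fin (2 * r + 1) → Fin (r + 1) := fun l => ⟨l.1 / 2, by have := l.2; omega⟩ with hp
  set q : Fin (2 * r + 1) → Fin (r + 1) := fun l => ⟨(l.1 + 1) / 2, by have := l.2; omega⟩ with hq
  set a : Fin (2 * r + 1) → Matrix (Fin (r + 1)) (Fin (r + 1)) K :=
    fun l => Matrix.single (p l) (q l) 1 with ha
  have hUT : ∀ l, IsUT (a l) := by
    intro l i j hij
    show Matrix.single (p l) (q l) 1 i j = 0
    refine Matrix.single_apply_of_ne _ _ _ _ _ ?_
    rintro ⟨rfl, rfl⟩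
    simp only [hp, hq] at hij
    omega
  have key := hid a hUT
  -- compute stdEval a
  have hprod : ∀ σ : Equiv.Perm (Fin (2 * r + 1)),
      (List.ofFn fun i => a (σ i)).prod =
        if σ = 1 then Matrix.single (p (σ 0)) (q (σ (Fin.last (2 * r)))) 1 else 0 := by
    intro σ
    have hform : (List.ofFn fun i => a (σ i)) =
        List.ofFn fun i : Fin (2 * r + 1) =>
          Matrix.single ((fun l => (p (σ l), q (σ l))) i).1 ((fun l => (p (σ l), q (σ l))) i).2
            (1 : K) := rfl
    by_cases hσ : σ = 1
    · rw [if_pos hσ, hform, prod_std_chain (2 * r) (fun l => (p (σ l), q (σ l)))]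
      intro i
      rw [hσ]
      simp only [Equiv.Perm.coe_one, id_eq, hp, hq]
      have h1 : (Fin.castSucc i : ℕ) = (i : ℕ) := rfl
      have h2 : (Fin.succ i : ℕ) = (i : ℕ) + 1 := rfl
      exact Fin.ext (by simp [h1, h2])
    · rw [if_neg hσ, hform]
      apply prod_std_not_chain
      intro hchain
      apply hσ
      have hmono : StrictMono ⇑σ := by
        rw [Fin.strictMono_iff_lt_succ]
        intro i
        have hc := hchain i
        simp only [hp, hq, Fin.ext_iff] at hc
        have hne : ((σ i.castSucc : Fin (2 * r + 1)) : ℕ) ≠ ((σ i.succ : Fin (2 * r + 1)) : ℕ) := by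
          intro h
          have : i.castSucc = i.succ := σ.injective (Fin.ext h)
          simpa [Fin.ext_iff] using this
        rw [Fin.lt_def]
        omega
      have hrange : Set.range ⇑σ = Set.range (id : Fin (2 * r + 1) → Fin (2 * r + 1)) := by
        rw [σ.surjective.range_eq, Set.range_id]
      haveI : WellFoundedLT (Fin (2 * r + 1)) := Finite.to_wellFoundedLT
      have : ⇑σ = id := (hmono.range_inj strictMono_id).1 hrange
      exact Equiv.ext fun x => congrFun this x
  have hsum : stdEval (K := K) (2 * r + 1) a =
      Matrix.single (p 0) (q (Fin.last (2 * r))) 1 := by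
    rw [stdEval]
    rw [Finset.sum_eq_single (1 : Equiv.Perm (Fin (2 * r + 1)))]
    · rw [hprod 1, if_pos rfl]
      simp
    · intro σ _ hσ
      rw [hprod σ, if_neg hσ, smul_zero]
    · intro h
      exact absurd (Finset.mem_univ _) h
  rw [hsum] at key
  have := congrFun (congrFun key (p 0)) (q (Fin.last (2 * r)))
  rw [Matrix.single_apply_same] at this
  simpa using this

/-- The standard polynomial `St_{2r+1}` is a polynomial identity of `UT_r(K)` but not of
`UT_{r+1}(K)`. -/
theorem standard_poly_odd_identity_UT {K : Type*} [Field K] (r : ℕ) (hr : 1 ≤ r) :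
    (∀ a : Fin (2 * r + 1) → Matrix (Fin r) (Fin r) K,
        (∀ l, IsUT (a l)) → stdEval (K := K) (2 * r + 1) a = 0) ∧
      ¬ ∀ a : Fin (2 * r + 1) → Matrix (Fin (r + 1)) (Fin (r + 1)) K,
          (∀ l, IsUT (a l)) → stdEval (K := K) (2 * r + 1) a = 0 :=
  ⟨fun a hUT => UT_identity_aux r a hUT, UT_not_identity_aux r hr⟩
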